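/- Let X ⊆ ℝ² be a fence, let p ∈ X, let 0 < q < r < r', and let ϑ ∈ S_q(p). If β ∈ 𝔅_{qrϑ} and β' ∈ 𝔅_{qr'ϑ}, then β ∩ β' ⊆ S_q(p); that is, the two bends are disjoint outside the circle S_q(p). -/

import Mathlib

open Set Filter Topology Metric

noncomputable section

/-- An arc in a topological space: a subset homeomorphic to the closed unit
interval `[0,1]`. -/
def IsArc {X : Type*} [TopologicalSpace X] (A : Set X) : Prop :=
  Nonempty (Set.Icc (0 : ℝ) 1 ≃ₜ A)

/-- `x` is an endpoint of the arc `A`: it is the image of `0` or `1` under some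
homeomorphism from `[0,1]` onto `A`. -/
def IsArcEndpoint {X : Type*} [TopologicalSpace X] (A : Set X) (x : X) : Prop :=
  ∃ e : Set.Icc (0 : ℝ) 1 ≃ₜ A,
    (e ⟨0, by norm_num⟩ : X) = x ∨ (e ⟨1, by norm_num⟩ : X) = x

/-- A point `x` on the frontier of an open set `U` is a piercing point of `U` if
for every open `V ∋ x` and every arc `α` in the space containing `x` with `x` not
an endpoint of `α`, the set `α ∩ V` meets both `U` and the complement of the
closure of `U`. -/
def IsPiercingPoint {X : Type*} [TopologicalSpace X] (U : Set X) (x : X) : Prop :=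
  x ∈ frontier U ∧
    ∀ V : Set X, IsOpen V → x ∈ V →
      ∀ α : Set X, IsArc α → x ∈ α → ¬ IsArcEndpoint α x →
        (α ∩ V ∩ U).Nonempty ∧ (α ∩ V ∩ (closure U)ᶜ).Nonempty

/-- An open set is pierced if every point of its frontier is a piercing point. -/
def IsPierced {X : Type*} [TopologicalSpace X] (U : Set X) : Prop :=
  IsOpen U ∧ ∀ x ∈ frontier U, IsPiercingPoint U x

/-- A space has the Jure property if its topology has a basis of pierced open sets. -/
def HasJureProperty (X : Type*) [TopologicalSpace X] : Prop :=
  ∃ B : Set (Set X), TopologicalSpace.IsTopologicalBasis B ∧ ∀ U ∈ B, IsPierced U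

/-- A fence: a compact metric space each of whose connected components is an arc
or a single point. -/
def IsFenceSpace (X : Type*) [MetricSpace X] : Prop :=
  CompactSpace X ∧
    ∀ x : X, IsArc (connectedComponent x) ∨ connectedComponent x = {x}

/-- `X` is a fan with vertex `v`: a continuum which is the union of a collection
of arcs any two of which meet exactly at `v`, and in which the intersection of
any two subcontinua is connected. -/
def IsFanWithVertex (X : Type*) [MetricSpace X] (v : X) : Prop :=
  Nonempty X ∧ CompactSpace X ∧ ConnectedSpace X ∧
    (∃ 𝓛 : Set (Set X), (∀ L ∈ 𝓛, IsArc L) ∧ ⋃₀ 𝓛 = Set.univ ∧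
      ∀ L ∈ 𝓛, ∀ L' ∈ 𝓛, L ≠ L' → L ∩ L' = {v}) ∧
    ∀ H K : Set X, H.Nonempty → IsCompact H → IsPreconnected H →
      K.Nonempty → IsCompact K → IsPreconnected K → IsPreconnected (H ∩ K)

/-- The Euclidean plane. -/
abbrev Plane : Type := EuclideanSpace ℝ (Fin 2)

/-- The closed annulus `A_{rq}(p)` between the circles of radii `r` and `q`
centered at `p`. -/
def closedAnnulus (p : Plane) (r q : ℝ) : Set Plane :=
  {x | min r q ≤ dist x p ∧ dist x p ≤ max r q}

/-- A fence inside the plane: a compact set each of whose connected components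
is an arc or a single point. -/
def IsFenceSet (X : Set Plane) : Prop :=
  IsCompact X ∧ ∀ x ∈ X,
    IsArc (connectedComponentIn X x) ∨ connectedComponentIn X x = {x}

/-- `β` is a bend at `S_r(p)` terminating at `S_q(p)`: an arc `β ⊆ X` contained
in the closed annulus `A_{rq}(p)`, meeting `S_r(p)`, and meeting `S_q(p)`
exactly in its two endpoints. -/
def IsBendTerminating (X : Set Plane) (p : Plane) (r q : ℝ) (β : Set Plane) : Prop :=
  IsArc β ∧ β ⊆ X ∧ β ⊆ closedAnnulus p r q ∧
    (β ∩ Metric.sphere p r).Nonempty ∧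
    β ∩ Metric.sphere p q = {x | IsArcEndpoint β x}

/-- `β` is a bend at `S_r(p)`: a bend terminating at `S_q(p)` for some `q > 0`. -/
def IsBendAt (X : Set Plane) (p : Plane) (r : ℝ) (β : Set Plane) : Prop :=
  ∃ q > 0, IsBendTerminating X p r q β

/-- The bend `β` (terminating at `S_q(p)`) separates `ϑ` from `∞`: there is an
arc `α ⊆ D_q(p)` meeting `S_q(p)` exactly at the endpoints of `β` such that `ϑ`
lies in a bounded connected component of the complement of `α ∪ β`. -/
def SeparatesFromInfinity (p : Plane) (q : ℝ) (β : Set Plane) (ϑ : Plane) : Prop :=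
  ∃ α : Set Plane, IsArc α ∧ α ⊆ Metric.closedBall p q ∧
    α ∩ Metric.sphere p q = {x | IsArcEndpoint β x} ∧
    ϑ ∉ α ∪ β ∧ Bornology.IsBounded (connectedComponentIn ((α ∪ β)ᶜ) ϑ)

/-- `𝔅_{qrϑ}`: the set of all bends at `S_r(p)` terminating at `S_q(p)` that
separate `ϑ` from `∞`. -/
def Bends (X : Set Plane) (p : Plane) (q r : ℝ) (ϑ : Plane) : Set (Set Plane) :=
  {β | IsBendTerminating X p r q β ∧ SeparatesFromInfinity p q β ϑ}

/-- Topological limit superior of a sequence of sets: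
`⋂_N closure (⋃_{n ≥ N} A n)`. -/
def setLimsup {X : Type*} [TopologicalSpace X] (A : ℕ → Set X) : Set X :=
  ⋂ N : ℕ, closure (⋃ n, ⋃ _ : N ≤ n, A n)

/-- The point `p + q • (cos θ, sin θ)` of the circle `S_q(p)`. -/
def circlePoint (p : Plane) (q θ : ℝ) : Plane :=
  p + (q * Real.cos θ) • EuclideanSpace.single (0 : Fin 2) (1 : ℝ)
    + (q * Real.sin θ) • EuclideanSpace.single (1 : Fin 2) (1 : ℝ)

namespace BendsAux

local notation "𝕀" => Set.Icc (0:ℝ) 1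

/-- Any self-homeomorphism of `[0,1]` maps endpoints to endpoints. -/
lemma homeo_boundary (u : 𝕀 ≃ₜ 𝕀) (z : 𝕀) (hz : (z : ℝ) = 0 ∨ (z : ℝ) = 1) :
    ((u z : ℝ) = 0 ∨ (u z : ℝ) = 1) := by
  by_contra h
  push_neg at h
  obtain ⟨h0, h1⟩ := h
  set t₁ : 𝕀 := u.symm ⟨0, by norm_num⟩ with ht₁
  set t₂ : 𝕀 := u.symm ⟨1, by norm_num⟩ with ht₂
  have hu1 : u t₁ = ⟨0, by norm_num⟩ := u.apply_symm_apply _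
  have hu2 : u t₂ = ⟨1, by norm_num⟩ := u.apply_symm_apply _
  have hne1 : (t₁ : ℝ) ≠ (z : ℝ) := by
    intro he
    exact h0 (by rw [show z = t₁ from Subtype.ext he.symm, hu1])
  have hne2 : (t₂ : ℝ) ≠ (z : ℝ) := by
    intro he
    exact h1 (by rw [show z = t₂ from Subtype.ext he.symm, hu2])
  clear_value t₁ t₂
  set s : Set 𝕀 := (Subtype.val) ⁻¹' Set.Icc (min (t₁:ℝ) (t₂:ℝ)) (max (t₁:ℝ) (t₂:ℝ)) with hs_def
  have hval : (Subtype.val '' s : Set ℝ)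
      = Set.Icc (min (t₁:ℝ) (t₂:ℝ)) (max (t₁:ℝ) (t₂:ℝ)) := by
    rw [Set.image_preimage_eq_inter_range, Subtype.range_coe]
    refine Set.inter_eq_left.mpr (Set.Icc_subset_Icc ?_ ?_)
    · rcases min_cases (t₁:ℝ) (t₂:ℝ) with ⟨hm, _⟩ | ⟨hm, _⟩ <;> rw [hm]
      exacts [t₁.2.1, t₂.2.1]
    · rcases max_cases (t₁:ℝ) (t₂:ℝ) with ⟨hm, _⟩ | ⟨hm, _⟩ <;> rw [hm]
      exacts [t₁.2.2, t₂.2.2]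
  have hs : IsPreconnected s := by
    rw [← Topology.IsInducing.subtypeVal.isPreconnected_image, hval]
    exact isPreconnected_Icc
  have hzs : z ∉ s := by
    intro hzmem
    rcases hz with hz0 | hz1
    · rw [hz0] at hne1 hne2
      have h1' : 0 < (t₁ : ℝ) := lt_of_le_of_ne t₁.2.1 (Ne.symm hne1)
      have h2' : 0 < (t₂ : ℝ) := lt_of_le_of_ne t₂.2.1 (Ne.symm hne2)
      have := hzmem.1
      rw [hz0] at this
      exact absurd this (not_le.mpr (lt_min h1' h2'))
    · rw [hz1] at hne1 hne2
      have h1' : (t₁ : ℝ) < 1 := lt_of_le_of_ne t₁.2.2 hne1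
      have h2' : (t₂ : ℝ) < 1 := lt_of_le_of_ne t₂.2.2 hne2
      have := hzmem.2
      rw [hz1] at this
      exact absurd this (not_le.mpr (max_lt h1' h2'))
  have ht₁s : t₁ ∈ s := ⟨min_le_left _ _, le_max_left _ _⟩
  have ht₂s : t₂ ∈ s := ⟨min_le_right _ _, le_max_right _ _⟩
  have hcont : ContinuousOn (fun w : 𝕀 => (u w : ℝ)) s :=
    (continuous_subtype_val.comp u.continuous).continuousOn
  have hmem : (u z : ℝ) ∈ Set.Icc ((fun w : 𝕀 => (u w : ℝ)) t₁) ((fun w : 𝕀 => (u w : ℝ)) t₂) := by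
    simp only [hu1, hu2]
    exact ⟨(u z).2.1, (u z).2.2⟩
  obtain ⟨w, hws, hw⟩ := hs.intermediate_value ht₁s ht₂s hcont hmem
  have hwz : w = z := u.injective (Subtype.ext hw)
  exact hzs (hwz ▸ hws)

/-- An injective continuous parametrization of an arc by `[a,b]` determines the arc
structure and its endpoints. -/
lemma arc_of_param {a b : ℝ} (hab : a < b) (ψ : Set.Icc a b → Plane)
    (hc : Continuous ψ) (hi : Function.Injective ψ) :
    IsArc (Set.range ψ) ∧
      ∀ x, IsArcEndpoint (Set.range ψ) x ↔
        (x = ψ ⟨a, Set.left_mem_Icc.mpr hab.le⟩ ∨ x = ψ ⟨b, Set.right_mem_Icc.mpr hab.le⟩) := by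
  have hba : (0:ℝ) < b - a := sub_pos.mpr hab
  -- affine equivalence 𝕀 ≃ Icc a b
  have haff : ∀ t : 𝕀, a + (t:ℝ) * (b - a) ∈ Set.Icc a b := by
    intro t
    constructor
    · nlinarith [t.2.1, t.2.2]
    · nlinarith [t.2.1, t.2.2]
  have hinv : ∀ s : Set.Icc a b, ((s:ℝ) - a) / (b - a) ∈ 𝕀 := by
    intro s
    constructor
    · exact div_nonneg (sub_nonneg.mpr s.2.1) hba.le
    · rw [div_le_one hba]
      linarith [s.2.2]
  set eqv : 𝕀 ≃ Set.Icc a b :=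
    { toFun := fun t => ⟨a + (t:ℝ) * (b - a), haff t⟩
      invFun := fun s => ⟨((s:ℝ) - a) / (b - a), hinv s⟩
      left_inv := by
        intro t
        apply Subtype.ext
        field_simp
        ring
      right_inv := by
        intro s
        apply Subtype.ext
        field_simp
        ring } with heqv
  have hceqv : Continuous eqv := by
    apply Continuous.subtype_mk
    exact continuous_const.add (continuous_subtype_val.mul continuous_const)
  let H : 𝕀 ≃ₜ Set.Icc a b := hceqv.homeoOfEquivCompactToT2
  have hH : ∀ t : 𝕀, (H t : ℝ) = a + (t:ℝ) * (b - a) := fun t => rfl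
  have hemb : IsClosedEmbedding ψ := hc.isClosedEmbedding hi
  let Hψ : Set.Icc a b ≃ₜ Set.range ψ := hemb.isEmbedding.toHomeomorph
  have hHψ : ∀ t : Set.Icc a b, (Hψ t : Plane) = ψ t := fun t => rfl
  set E : 𝕀 ≃ₜ Set.range ψ := H.trans Hψ with hE
  have hE0 : (E ⟨0, by norm_num⟩ : Plane) = ψ ⟨a, Set.left_mem_Icc.mpr hab.le⟩ := by
    rw [hE, Homeomorph.trans_apply, hHψ]
    exact congrArg ψ (Subtype.ext (by rw [hH]; norm_num))
  have hE1 : (E ⟨1, by norm_num⟩ : Plane) = ψ ⟨b, Set.right_mem_Icc.mpr hab.le⟩ := by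
    rw [hE, Homeomorph.trans_apply, hHψ]
    exact congrArg ψ (Subtype.ext (by rw [hH]; norm_num))
  refine ⟨⟨E⟩, fun x => ⟨?_, ?_⟩⟩
  · rintro ⟨f, hf⟩
    set u : 𝕀 ≃ₜ 𝕀 := f.trans E.symm with hu
    have key : ∀ z : 𝕀, ((z:ℝ) = 0 ∨ (z:ℝ) = 1) → (f z : Plane) = x →
        (x = ψ ⟨a, Set.left_mem_Icc.mpr hab.le⟩ ∨ x = ψ ⟨b, Set.right_mem_Icc.mpr hab.le⟩) := by
      intro z hz hfz
      rcases homeo_boundary u z hz with h0 | h1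
      · left
        have : u z = ⟨0, by norm_num⟩ := Subtype.ext h0
        rw [hu, Homeomorph.trans_apply] at this
        have : f z = E ⟨0, by norm_num⟩ := by
          rw [← E.apply_symm_apply (f z), this]
        rw [← hfz, this, hE0]
      · right
        have : u z = ⟨1, by norm_num⟩ := Subtype.ext h1
        rw [hu, Homeomorph.trans_apply] at this
        have : f z = E ⟨1, by norm_num⟩ := by
          rw [← E.apply_symm_apply (f z), this]
        rw [← hfz, this, hE1]
    rcases hf with hf | hf
    · exact key _ (Or.inl rfl) hf
    · exact key _ (Or.inr rfl) hf
  · rintro (rfl | rfl)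
    · exact ⟨E, Or.inl hE0⟩
    · exact ⟨E, Or.inr hE1⟩

end BendsAux

namespace BendsAux

local notation "𝕀" => Set.Icc (0:ℝ) 1

lemma isArc_exists_param {A : Set Plane} (h : IsArc A) :
    ∃ f : 𝕀 → Plane, Continuous f ∧ Function.Injective f ∧ Set.range f = A := by
  obtain ⟨e⟩ := h
  refine ⟨fun t => (e t : Plane), continuous_subtype_val.comp e.continuous,
    Subtype.coe_injective.comp e.injective, ?_⟩
  ext y
  constructor
  · rintro ⟨t, rfl⟩
    exact (e t).2
  · intro hy
    exact ⟨e.symm ⟨y, hy⟩, by simp⟩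

lemma isArc_isPreconnected {A : Set Plane} (h : IsArc A) : IsPreconnected A := by
  obtain ⟨f, hc, -, hr⟩ := isArc_exists_param h
  rw [← hr]
  haveI : PreconnectedSpace 𝕀 := Subtype.preconnectedSpace isPreconnected_Icc
  exact isPreconnected_range hc

lemma isArc_isCompact {A : Set Plane} (h : IsArc A) : IsCompact A := by
  obtain ⟨f, hc, -, hr⟩ := isArc_exists_param h
  rw [← hr]
  exact isCompact_range hc

lemma isArc_exists_pair {A : Set Plane} (h : IsArc A) :
    ∃ u v, u ∈ A ∧ v ∈ A ∧ u ≠ v := by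
  obtain ⟨f, -, hi, hr⟩ := isArc_exists_param h
  refine ⟨f ⟨0, by norm_num⟩, f ⟨1, by norm_num⟩, hr ▸ Set.mem_range_self _,
    hr ▸ Set.mem_range_self _, fun he => ?_⟩
  have := congrArg Subtype.val (hi he)
  norm_num at this

lemma interval_of_bend {β : Set Plane} {φ : 𝕀 → Plane}
    (hφc : Continuous φ) (hφi : Function.Injective φ)
    (hβ : IsArc β) (hβsub : β ⊆ Set.range φ) :
    ∃ a b : ℝ, a < b ∧ ∃ (ha : a ∈ Set.Icc (0:ℝ) 1) (hb : b ∈ Set.Icc (0:ℝ) 1),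
      (∀ t : 𝕀, (t:ℝ) ∈ Set.Icc a b ↔ φ t ∈ β) ∧
      (∀ y, IsArcEndpoint β y ↔ (y = φ ⟨a, ha⟩ ∨ y = φ ⟨b, hb⟩)) := by
  set T : Set 𝕀 := φ ⁻¹' β with hT
  have hφemb : IsClosedEmbedding φ := hφc.isClosedEmbedding hφi
  have hβcl : IsClosed β := (isArc_isCompact hβ).isClosed
  have himg : φ '' T = β := Set.image_preimage_eq_of_subset hβsub
  have hTpre : IsPreconnected T := by
    have h2 := hφemb.isInducing.isPreconnected_image (s := T)
    rw [himg] at h2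
    exact h2.mp (isArc_isPreconnected hβ)
  set S : Set ℝ := Subtype.val '' T with hS
  have hSpre : IsPreconnected S := hTpre.image _ continuous_subtype_val.continuousOn
  have hScomp : IsCompact S := ((hβcl.preimage hφc).isCompact).image continuous_subtype_val
  have hSne : S.Nonempty := by
    obtain ⟨u, v, hu, -, -⟩ := isArc_exists_pair hβ
    obtain ⟨t, ht⟩ := hβsub hu
    exact ⟨t, ⟨t, by rw [hT, Set.mem_preimage, ht]; exact hu, rfl⟩⟩
  have hIcc : S = Set.Icc (sInf S) (sSup S) := eq_Icc_of_connected_compact ⟨hSne, hSpre⟩ hScomp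
  set a := sInf S with ha_def
  set b := sSup S with hb_def
  have hab_le : a ≤ b := by
    obtain ⟨w, hw⟩ := hSne
    rw [hIcc] at hw
    exact le_trans hw.1 hw.2
  have haS : a ∈ S := by rw [hIcc]; exact ⟨le_refl _, hab_le⟩
  have hbS : b ∈ S := by rw [hIcc]; exact ⟨hab_le, le_refl _⟩
  have hsub01 : S ⊆ Set.Icc (0:ℝ) 1 := by
    rintro w ⟨t, -, rfl⟩
    exact t.2
  have ha : a ∈ Set.Icc (0:ℝ) 1 := hsub01 haS
  have hb : b ∈ Set.Icc (0:ℝ) 1 := hsub01 hbS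
  have hmem : ∀ t : 𝕀, (t:ℝ) ∈ Set.Icc a b ↔ φ t ∈ β := by
    intro t
    constructor
    · intro htm
      rw [← hIcc] at htm
      obtain ⟨u, huT, huv⟩ := htm
      rwa [show u = t from Subtype.ext huv] at huT
    · intro htβ
      rw [← hIcc]
      exact ⟨t, htβ, rfl⟩
  have hab : a < b := by
    rcases lt_or_eq_of_le hab_le with h | h
    · exact h
    · exfalso
      obtain ⟨u, v, hu, hv, huv⟩ := isArc_exists_pair hβ
      obtain ⟨tu, htu⟩ := hβsub hu
      obtain ⟨tv, htv⟩ := hβsub hv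
      have h1 : (tu:ℝ) ∈ Set.Icc a b := (hmem tu).mpr (htu ▸ hu)
      have h2 : (tv:ℝ) ∈ Set.Icc a b := (hmem tv).mpr (htv ▸ hv)
      rw [← h] at h1 h2
      have htuv : tu = tv := Subtype.ext (by rw [le_antisymm h1.2 h1.1, le_antisymm h2.2 h2.1])
      exact huv (by rw [← htu, ← htv, htuv])
  have hsubI : Set.Icc a b ⊆ Set.Icc (0:ℝ) 1 := Set.Icc_subset_Icc ha.1 hb.2
  set ψ : Set.Icc a b → Plane := fun t => φ ⟨t.1, hsubI t.2⟩ with hψ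
  have hψc : Continuous ψ := hφc.comp (continuous_subtype_val.subtype_mk _)
  have hψi : Function.Injective ψ := by
    intro s t hst
    have := congrArg Subtype.val (hφi hst)
    exact Subtype.ext this
  have hψr : Set.range ψ = β := by
    ext y
    constructor
    · rintro ⟨t, rfl⟩
      exact (hmem ⟨t.1, hsubI t.2⟩).mp t.2
    · intro hy
      obtain ⟨t, ht⟩ := hβsub hy
      have htm : (t:ℝ) ∈ Set.Icc a b := (hmem t).mpr (ht ▸ hy)
      refine ⟨⟨(t:ℝ), htm⟩, ?_⟩
      show φ ⟨(t:ℝ), _⟩ = y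
      rwa [Subtype.coe_eta]
  obtain ⟨-, hend⟩ := arc_of_param hab ψ hψc hψi
  rw [hψr] at hend
  exact ⟨a, b, hab, ha, hb, hmem, fun y => hend y⟩

end BendsAux

open BendsAux

/-- Bends at different radii are disjoint outside `S_q(p)`. -/
theorem bends_at_different_radii_disjoint_off_Sq (X : Set Plane)
    (hX : IsFenceSet X) (p : Plane) (hp : p ∈ X) (q r r' : ℝ)
    (hq : 0 < q) (hqr : q < r) (hrr' : r < r') (ϑ : Plane) (hϑ : ϑ ∈ Metric.sphere p q)
    (β β' : Set Plane) (hβ : β ∈ Bends X p q r ϑ) (hβ' : β' ∈ Bends X p q r' ϑ) :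
    β ∩ β' ⊆ Metric.sphere p q := by
  rintro x ⟨hxβ, hxβ'⟩
  obtain ⟨⟨arcβ, hβX, hβann, hβr, hβsq⟩, -⟩ := hβ
  obtain ⟨⟨arcβ', hβ'X, hβ'ann, hβ'r, hβ'sq⟩, -⟩ := hβ'
  by_contra hxs
  have hxX : x ∈ X := hβX hxβ
  have hβC : β ⊆ connectedComponentIn X x :=
    (isArc_isPreconnected arcβ).subset_connectedComponentIn hxβ hβX
  have hβ'C : β' ⊆ connectedComponentIn X x :=
    (isArc_isPreconnected arcβ').subset_connectedComponentIn hxβ' hβ'X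
  rcases hX.2 x hxX with hC | hC
  swap
  · obtain ⟨u, v, hu, hv, huv⟩ := isArc_exists_pair arcβ
    have hu' := hβC hu
    have hv' := hβC hv
    rw [hC] at hu' hv'
    exact huv (hu'.trans hv'.symm)
  obtain ⟨φ, hφc, hφi, hφr⟩ := isArc_exists_param hC
  have hβsub : β ⊆ Set.range φ := by rw [hφr]; exact hβC
  have hβ'sub : β' ⊆ Set.range φ := by rw [hφr]; exact hβ'C
  obtain ⟨a, b, hab, ha, hb, hmemβ, hendβ⟩ := interval_of_bend hφc hφi arcβ hβsub
  obtain ⟨a', b', hab', ha', hb', hmemβ', hendβ'⟩ := interval_of_bend hφc hφi arcβ' hβ'sub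
  have hfa : φ ⟨a, ha⟩ ∈ β ∩ Metric.sphere p q := by
    rw [hβsq]; exact (hendβ _).mpr (Or.inl rfl)
  have hfb : φ ⟨b, hb⟩ ∈ β ∩ Metric.sphere p q := by
    rw [hβsq]; exact (hendβ _).mpr (Or.inr rfl)
  obtain ⟨s, hsx⟩ := hβsub hxβ
  have hsβ : (s:ℝ) ∈ Set.Icc a b := (hmemβ s).mpr (hsx ▸ hxβ)
  have hsβ' : (s:ℝ) ∈ Set.Icc a' b' := (hmemβ' s).mpr (hsx ▸ hxβ')
  have hsa : a < (s:ℝ) := by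
    rcases lt_or_eq_of_le hsβ.1 with h | h
    · exact h
    · exact absurd (by rw [← hsx, show s = ⟨a, ha⟩ from Subtype.ext h.symm]; exact hfa.2) hxs
  have hsb : (s:ℝ) < b := by
    rcases lt_or_eq_of_le hsβ.2 with h | h
    · exact h
    · exact absurd (by rw [← hsx, show s = ⟨b, hb⟩ from Subtype.ext h]; exact hfb.2) hxs
  obtain ⟨e, heβ', hesp⟩ := hβ'r
  have heβ : e ∉ β := by
    intro heβ
    have h2 := (hβann heβ).2
    rw [max_eq_left hqr.le] at h2
    rw [Metric.mem_sphere] at hesp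
    rw [hesp] at h2
    linarith
  obtain ⟨te, hte⟩ := hβ'sub heβ'
  have hteβ' : (te:ℝ) ∈ Set.Icc a' b' := (hmemβ' te).mpr (hte ▸ heβ')
  have hteβ : (te:ℝ) ∉ Set.Icc a b := fun hm => heβ (hte ▸ (hmemβ te).mp hm)
  rw [Set.mem_Icc, not_and_or, not_le, not_le] at hteβ
  rcases hteβ with hlt | hgt
  · have h1 : a' < a := lt_of_le_of_lt hteβ'.1 hlt
    have h2 : a < b' := lt_of_lt_of_le hsa hsβ'.2
    have hmm : φ ⟨a, ha⟩ ∈ β' := (hmemβ' ⟨a, ha⟩).mp ⟨h1.le, h2.le⟩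
    have hsp : φ ⟨a, ha⟩ ∈ β' ∩ Metric.sphere p q := ⟨hmm, hfa.2⟩
    rw [hβ'sq] at hsp
    rcases (hendβ' _).mp hsp with h | h
    · exact h1.ne' (congrArg Subtype.val (hφi h))
    · exact h2.ne (congrArg Subtype.val (hφi h))
  · have h1 : b < b' := lt_of_lt_of_le hgt hteβ'.2
    have h2 : a' < b := lt_of_le_of_lt hsβ'.1 hsb
    have hmm : φ ⟨b, hb⟩ ∈ β' := (hmemβ' ⟨b, hb⟩).mp ⟨h2.le, h1.le⟩
    have hsp : φ ⟨b, hb⟩ ∈ β' ∩ Metric.sphere p q := ⟨hmm, hfb.2⟩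
    rw [hβ'sq] at hsp
    rcases (hendβ' _).mp hsp with h | h
    · exact h2.ne' (congrArg Subtype.val (hφi h))
    · exact h1.ne (congrArg Subtype.val (hφi h))
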